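/- Let k ≥ 1 be an integer, let 0 ≤ a < b with b − a < π, and let f : [a,b] → [0,∞) be continuous, not identically zero, and sin^k-concave. Then (1) for all a ≤ x ≤ y ≤ z ≤ b one has f(y) ≥ min(f(x), f(z)) (so f has no local minima), and (2) f attains its maximum over [a,b] at exactly one point. -/

import Mathlib

/-- `f` is `sin^k`-concave on the interval `I` (of length `< π`). -/
def SinPowConcaveOn (k : ℕ) (I : Set ℝ) (f : ℝ → ℝ) : Prop :=
  ∀ x₁ ∈ I, ∀ x₂ ∈ I, x₁ ≠ x₂ → ∀ α : ℝ, 0 < α → α < 1 →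
    (Real.sin (α * |x₂ - x₁|) / Real.sin |x₂ - x₁|) * f x₁ ^ (1 / (k : ℝ)) +
        (Real.sin ((1 - α) * |x₂ - x₁|) / Real.sin |x₂ - x₁|) * f x₂ ^ (1 / (k : ℝ))
      ≤ f (α * x₁ + (1 - α) * x₂) ^ (1 / (k : ℝ))

/-- Sum-to-product in the form we need. -/
lemma sin_sum_eq {d α : ℝ} :
    Real.sin (α * d) + Real.sin ((1 - α) * d) =
      2 * Real.sin (d / 2) * Real.cos ((2 * α - 1) * (d / 2)) := by
  have h1 : α * d = d / 2 + (2 * α - 1) * (d / 2) := by ring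
  have h2 : (1 - α) * d = d / 2 - (2 * α - 1) * (d / 2) := by ring
  rw [h1, h2, Real.sin_add, Real.sin_sub]
  ring

/-- Key trigonometric inequality: for `0 < d < π` and `0 < α < 1`,
`sin d ≤ sin (α d) + sin ((1-α) d)`. -/
lemma sin_le_sin_add_sin {d α : ℝ} (hd : 0 < d) (hdπ : d < Real.pi)
    (hα : 0 < α) (hα1 : α < 1) :
    Real.sin d ≤ Real.sin (α * d) + Real.sin ((1 - α) * d) := by
  have hd2 : Real.sin d = 2 * Real.sin (d / 2) * Real.cos (d / 2) := by
    rw [← Real.sin_two_mul]; ring_nf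
  rw [sin_sum_eq, hd2]
  have hs : 0 < Real.sin (d / 2) :=
    Real.sin_pos_of_pos_of_lt_pi (by linarith) (by linarith [Real.pi_pos])
  have hcos : Real.cos (d / 2) ≤ Real.cos ((2 * α - 1) * (d / 2)) := by
    rw [← Real.cos_abs ((2 * α - 1) * (d / 2))]
    apply Real.cos_le_cos_of_nonneg_of_le_pi (abs_nonneg _) (by linarith)
    rw [abs_mul, abs_of_pos (by linarith : (0:ℝ) < d / 2)]
    have : |2 * α - 1| ≤ 1 := by rw [abs_le]; constructor <;> linarith
    nlinarith
  nlinarith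

lemma sin_lt_two_sin_half {d : ℝ} (hd : 0 < d) (hdπ : d < Real.pi) :
    Real.sin d < 2 * Real.sin (d / 2) := by
  have hd2 : Real.sin d = 2 * Real.sin (d / 2) * Real.cos (d / 2) := by
    rw [← Real.sin_two_mul]; ring_nf
  have hs : 0 < Real.sin (d / 2) :=
    Real.sin_pos_of_pos_of_lt_pi (by linarith) (by linarith [Real.pi_pos])
  have hc : Real.cos (d / 2) < 1 := by
    nlinarith [Real.sin_sq_add_cos_sq (d / 2), sq_nonneg (Real.cos (d / 2) - 1),
      mul_pos hs hs]
  nlinarith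

/-- A continuous, not identically zero, `sin^k`-concave function `f : [a,b] → [0,∞)`
(with `b - a < π`) has no local minima (`f(y) ≥ min(f(x), f(z))` for `x ≤ y ≤ z`) and
attains its maximum at exactly one point. -/
theorem sinPowConcave_no_local_min_and_unique_max (k : ℕ) (hk : 1 ≤ k)
    (a b : ℝ) (hab : a < b) (ha : 0 ≤ a) (hlen : b - a < Real.pi)
    (f : ℝ → ℝ) (hfc : ContinuousOn f (Set.Icc a b))
    (hfnonneg : ∀ x ∈ Set.Icc a b, 0 ≤ f x)
    (hfne : ∃ x ∈ Set.Icc a b, f x ≠ 0)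
    (hconc : SinPowConcaveOn k (Set.Icc a b) f) :
    (∀ x y z : ℝ, a ≤ x → x ≤ y → y ≤ z → z ≤ b → min (f x) (f z) ≤ f y) ∧
      (∃! m : ℝ, m ∈ Set.Icc a b ∧ ∀ x ∈ Set.Icc a b, f x ≤ f m) := by
  have hkpos : (0:ℝ) < 1 / (k : ℝ) := by
    have : (0:ℝ) < (k : ℝ) := by exact_mod_cast hk
    positivity
  -- Part 1
  have part1 : ∀ x y z : ℝ, a ≤ x → x ≤ y → y ≤ z → z ≤ b → min (f x) (f z) ≤ f y := by
    intro x y z hax hxy hyz hzb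
    rcases eq_or_lt_of_le hxy with rfl | hxy
    · exact min_le_left _ _
    rcases eq_or_lt_of_le hyz with rfl | hyz
    · exact min_le_right _ _
    have hx : x ∈ Set.Icc a b := ⟨hax, by linarith⟩
    have hz : z ∈ Set.Icc a b := ⟨by linarith, hzb⟩
    have hxz : x < z := lt_trans hxy hyz
    set α : ℝ := (z - y) / (z - x) with hα
    have hzx : 0 < z - x := by linarith
    have hα0 : 0 < α := by apply div_pos <;> linarith
    have hα1 : α < 1 := by rw [hα, div_lt_one hzx]; linarith
    have hcomb : α * x + (1 - α) * z = y := by rw [hα]; field_simp; ring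
    have hd : |z - x| = z - x := abs_of_pos hzx
    have hdπ : z - x < Real.pi := by linarith
    have hsin : 0 < Real.sin (z - x) := Real.sin_pos_of_pos_of_lt_pi hzx hdπ
    have hmain := hconc x hx z hz (ne_of_lt hxz) α hα0 hα1
    rw [hd, hcomb] at hmain
    have hsum := sin_le_sin_add_sin hzx hdπ hα0 hα1
    have hs1 : 0 ≤ Real.sin (α * (z - x)) :=
      Real.sin_nonneg_of_nonneg_of_le_pi (by positivity) (by nlinarith)
    have hs2 : 0 ≤ Real.sin ((1 - α) * (z - x)) :=
      Real.sin_nonneg_of_nonneg_of_le_pi (by nlinarith) (by nlinarith)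
    have hfx := hfnonneg x hx
    have hfz := hfnonneg z hz
    have hfy := hfnonneg y ⟨by linarith, by linarith⟩
    have hcoef : 1 ≤ Real.sin (α * (z - x)) / Real.sin (z - x) +
        Real.sin ((1 - α) * (z - x)) / Real.sin (z - x) := by
      rw [← add_div, le_div_iff₀ hsin]
      linarith
    have hc1 : 0 ≤ Real.sin (α * (z - x)) / Real.sin (z - x) := div_nonneg hs1 hsin.le
    have hc2 : 0 ≤ Real.sin ((1 - α) * (z - x)) / Real.sin (z - x) := div_nonneg hs2 hsin.le
    rcases le_total (f x) (f z) with hle | hle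
    · rw [min_eq_left hle, ← Real.rpow_le_rpow_iff hfx hfy hkpos]
      have hrle : f x ^ (1/(k:ℝ)) ≤ f z ^ (1/(k:ℝ)) := Real.rpow_le_rpow hfx hle hkpos.le
      have h0 : 0 ≤ f x ^ (1/(k:ℝ)) := Real.rpow_nonneg hfx _
      calc f x ^ (1/(k:ℝ)) = 1 * f x ^ (1/(k:ℝ)) := by ring
        _ ≤ (Real.sin (α * (z - x)) / Real.sin (z - x) +
            Real.sin ((1 - α) * (z - x)) / Real.sin (z - x)) * f x ^ (1/(k:ℝ)) :=
          mul_le_mul_of_nonneg_right hcoef h0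
        _ = (Real.sin (α * (z - x)) / Real.sin (z - x)) * f x ^ (1/(k:ℝ)) +
            (Real.sin ((1 - α) * (z - x)) / Real.sin (z - x)) * f x ^ (1/(k:ℝ)) := by ring
        _ ≤ (Real.sin (α * (z - x)) / Real.sin (z - x)) * f x ^ (1/(k:ℝ)) +
            (Real.sin ((1 - α) * (z - x)) / Real.sin (z - x)) * f z ^ (1/(k:ℝ)) :=
          add_le_add_right (mul_le_mul_of_nonneg_left hrle hc2) _
        _ ≤ f y ^ (1/(k:ℝ)) := hmain
    · rw [min_eq_right hle, ← Real.rpow_le_rpow_iff hfz hfy hkpos]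
      have hrle : f z ^ (1/(k:ℝ)) ≤ f x ^ (1/(k:ℝ)) := Real.rpow_le_rpow hfz hle hkpos.le
      have h0 : 0 ≤ f z ^ (1/(k:ℝ)) := Real.rpow_nonneg hfz _
      calc f z ^ (1/(k:ℝ)) = 1 * f z ^ (1/(k:ℝ)) := by ring
        _ ≤ (Real.sin (α * (z - x)) / Real.sin (z - x) +
            Real.sin ((1 - α) * (z - x)) / Real.sin (z - x)) * f z ^ (1/(k:ℝ)) :=
          mul_le_mul_of_nonneg_right hcoef h0
        _ = (Real.sin (α * (z - x)) / Real.sin (z - x)) * f z ^ (1/(k:ℝ)) +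
            (Real.sin ((1 - α) * (z - x)) / Real.sin (z - x)) * f z ^ (1/(k:ℝ)) := by ring
        _ ≤ (Real.sin (α * (z - x)) / Real.sin (z - x)) * f x ^ (1/(k:ℝ)) +
            (Real.sin ((1 - α) * (z - x)) / Real.sin (z - x)) * f z ^ (1/(k:ℝ)) :=
          add_le_add_left (mul_le_mul_of_nonneg_left hrle hc1) _
        _ ≤ f y ^ (1/(k:ℝ)) := hmain
  refine ⟨part1, ?_⟩
  -- existence of max
  obtain ⟨m, hm, hmax⟩ := (isCompact_Icc (a := a) (b := b)).exists_isMaxOn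
    (Set.nonempty_Icc.mpr hab.le) hfc
  have hmax' : ∀ x ∈ Set.Icc a b, f x ≤ f m := fun x hx => hmax hx
  obtain ⟨x₀, hx₀, hfx₀⟩ := hfne
  have hM : 0 < f m := lt_of_lt_of_le (lt_of_le_of_ne (hfnonneg x₀ hx₀) (Ne.symm hfx₀))
    (hmax' x₀ hx₀)
  refine ⟨m, ⟨hm, hmax'⟩, ?_⟩
  rintro m' ⟨hm', hmax''⟩
  by_contra hne
  have heq : f m' = f m := le_antisymm (hmax' m' hm') (hmax'' m hm)
  set d : ℝ := |m - m'| with hdd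
  have hd0 : 0 < d := abs_pos.mpr (sub_ne_zero.mpr (fun h => hne h.symm))
  have hdπ : d < Real.pi := by
    rw [hdd, abs_sub_lt_iff]
    obtain ⟨h1, h2⟩ := hm; obtain ⟨h3, h4⟩ := hm'
    constructor <;> linarith
  have hsin : 0 < Real.sin d := Real.sin_pos_of_pos_of_lt_pi hd0 hdπ
  have hmid : (1/2 : ℝ) * m' + (1 - 1/2) * m ∈ Set.Icc a b := by
    obtain ⟨h1, h2⟩ := hm; obtain ⟨h3, h4⟩ := hm'
    constructor <;> linarith
  have hmain := hconc m' hm' m hm hne (1/2) (by norm_num) (by norm_num)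
  rw [show f m' ^ (1/(k:ℝ)) = f m ^ (1/(k:ℝ)) by rw [heq]] at hmain
  have hlt : f m ^ (1/(k:ℝ)) < f ((1/2 : ℝ) * m' + (1 - 1/2) * m) ^ (1/(k:ℝ)) := by
    have h2s : Real.sin d < 2 * Real.sin (d / 2) := sin_lt_two_sin_half hd0 hdπ
    have hMp : 0 < f m ^ (1/(k:ℝ)) := Real.rpow_pos_of_pos hM _
    have hcoef : 1 < Real.sin ((1/2 : ℝ) * d) / Real.sin d +
        Real.sin ((1 - 1/2 : ℝ) * d) / Real.sin d := by
      rw [show (1/2 : ℝ) * d = d / 2 by ring, show (1 - 1/2 : ℝ) * d = d / 2 by ring,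
        ← add_div, lt_div_iff₀ hsin]
      linarith
    calc f m ^ (1/(k:ℝ))
        < (Real.sin ((1/2 : ℝ) * d) / Real.sin d +
            Real.sin ((1 - 1/2 : ℝ) * d) / Real.sin d) * f m ^ (1/(k:ℝ)) :=
          (lt_mul_iff_one_lt_left hMp).mpr hcoef
      _ = (Real.sin ((1/2 : ℝ) * d) / Real.sin d) * f m ^ (1/(k:ℝ)) +
            (Real.sin ((1 - 1/2 : ℝ) * d) / Real.sin d) * f m ^ (1/(k:ℝ)) := by ring
      _ ≤ f ((1/2 : ℝ) * m' + (1 - 1/2) * m) ^ (1/(k:ℝ)) := hmain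
  have hle2 : f ((1/2 : ℝ) * m' + (1 - 1/2) * m) ^ (1/(k:ℝ)) ≤ f m ^ (1/(k:ℝ)) :=
    Real.rpow_le_rpow (hfnonneg _ hmid) (hmax' _ hmid) hkpos.le
  linarith
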